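/- For λ_c, λ_d, c_s > 0, the function V(b) = ( c_s + (λ_d/(λ_d+λ_c))·( b − (1 − e^{−(λ_d+λ_c)b})/(λ_c+λ_d) ) ) / ( (λ_d/(λ_c+λ_d))·(1 − e^{−(λ_d+λ_c)b}) ), defined for b > 0, attains a global minimum at some b* > 0, and any critical point of V satisfies e^{−(λ_c+λ_d)b}·( 1 + (c_s/λ_d)(λ_c+λ_d)² + b(λ_c+λ_d) ) = 1. -/

import Mathlib

open Real

theorem stmt_6 (lc ld cs : ℝ) (hlc : 0 < lc) (hld : 0 < ld) (hcs : 0 < cs)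
    (V : ℝ → ℝ)
    (hV : ∀ b, V b =
      (cs + (ld / (ld + lc)) * (b - (1 - Real.exp (-(ld + lc) * b)) / (lc + ld))) /
        ((ld / (lc + ld)) * (1 - Real.exp (-(ld + lc) * b)))) :
    (∃ bstar > (0 : ℝ), ∀ b > (0 : ℝ), V bstar ≤ V b) ∧
    (∀ b > (0 : ℝ), deriv V b = 0 →
      Real.exp (-(lc + ld) * b) *
        (1 + (cs / ld) * (lc + ld) ^ 2 + b * (lc + ld)) = 1) := by
  have hμ : (0:ℝ) < lc + ld := by linarith
  have hμ' : (lc+ld) ≠ 0 := ne_of_gt hμ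
  have hld' : ld ≠ 0 := ne_of_gt hld
  set num : ℝ → ℝ :=
    fun b => cs + (ld/(lc+ld))*(b - (1 - Real.exp (-(lc+ld)*b))/(lc+ld)) with hnumdef
  set den : ℝ → ℝ :=
    fun b => (ld/(lc+ld))*(1 - Real.exp (-(lc+ld)*b)) with hdendef
  have hVeq : V = fun b => num b / den b := by
    funext b
    rw [hV b, hnumdef, hdendef]
    simp only [add_comm ld lc]
  have hx0 : ∀ b : ℝ, 0 < Real.exp (-(lc+ld)*b) := fun b => Real.exp_pos _
  have hx1 : ∀ b > (0:ℝ), Real.exp (-(lc+ld)*b) < 1 := by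
    intro b hb
    rw [← Real.exp_zero]
    exact Real.exp_lt_exp.mpr (by nlinarith)
  have hden_pos : ∀ b > (0:ℝ), 0 < den b := by
    intro b hb
    simp only [hdendef]
    have h1 : 0 < 1 - Real.exp (-(lc+ld)*b) := by linarith [hx1 b hb]
    exact mul_pos (by positivity) h1
  have hEle : ∀ b : ℝ, 1 - Real.exp (-(lc+ld)*b) ≤ (lc+ld)*b := by
    intro b
    nlinarith [Real.add_one_le_exp (-(lc+ld)*b)]
  have hnum_cs : ∀ b > (0:ℝ), cs ≤ num b := by
    intro b hb
    simp only [hnumdef]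
    have hq : (1 - Real.exp (-(lc+ld)*b))/(lc+ld) ≤ b :=
      (div_le_iff₀ hμ).mpr (by nlinarith [hEle b])
    have hr : (0:ℝ) ≤ ld/(lc+ld) := by positivity
    nlinarith [mul_nonneg hr (sub_nonneg.mpr hq)]
  -- lower bound for large b
  have hVlbB : ∀ b > (0:ℝ), b - 1/(lc+ld) ≤ V b := by
    intro b hb
    rw [hVeq]
    simp only
    rw [le_div_iff₀ (hden_pos b hb)]
    simp only [hnumdef, hdendef]
    have key : cs + ld / (lc + ld) * (b - (1 - Real.exp (-(lc+ld)*b)) / (lc + ld))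
        - (b - 1 / (lc + ld)) * (ld / (lc + ld) * (1 - Real.exp (-(lc+ld)*b)))
        = cs + (ld / (lc + ld)) * b * Real.exp (-(lc+ld)*b) := by ring
    nlinarith [mul_nonneg (mul_nonneg (show (0:ℝ) ≤ ld/(lc+ld) by positivity) hb.le)
      (hx0 b).le]
  -- lower bound for small b
  have hVlbS : ∀ b > (0:ℝ), cs/(ld*b) ≤ V b := by
    intro b hb
    rw [hVeq]
    simp only
    have hdle : den b ≤ ld * b := by
      simp only [hdendef]
      rw [div_mul_eq_mul_div, div_le_iff₀ hμ]
      nlinarith [hEle b, hx0 b]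
    exact div_le_div₀ (le_trans (le_of_lt hcs) (hnum_cs b hb)) (hnum_cs b hb)
      (hden_pos b hb) hdle
  constructor
  · -- existence of global minimum
    set C : ℝ := V 1 with hC
    set M : ℝ := max 2 (C + 1/(lc+ld) + 1) with hM
    set δ : ℝ := min 1 (cs/(ld*(|C|+1))) with hδ
    have hδpos : 0 < δ := by
      apply lt_min one_pos
      positivity
    have hδ1 : δ ≤ 1 := min_le_left _ _
    have h1M : (1:ℝ) ≤ M := le_trans (by norm_num) (le_max_left _ _)
    have hδM : δ ≤ M := le_trans hδ1 h1M
    have hcont : ContinuousOn V (Set.Icc δ M) := by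
      rw [hVeq]
      apply ContinuousOn.div
      · simp only [hnumdef]; fun_prop
      · simp only [hdendef]; fun_prop
      · intro x hx
        exact ne_of_gt (hden_pos x (lt_of_lt_of_le hδpos hx.1))
    obtain ⟨bs, hbs, hmin⟩ := (isCompact_Icc (a := δ) (b := M)).exists_isMinOn
      ⟨δ, Set.left_mem_Icc.mpr hδM⟩ hcont
    have h1mem : (1:ℝ) ∈ Set.Icc δ M := ⟨hδ1, h1M⟩
    have hVbsC : V bs ≤ C := isMinOn_iff.mp hmin 1 h1mem
    refine ⟨bs, lt_of_lt_of_le hδpos hbs.1, ?_⟩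
    intro b hb
    by_cases hmem : b ∈ Set.Icc δ M
    · exact isMinOn_iff.mp hmin b hmem
    · rw [Set.mem_Icc, not_and_or] at hmem
      rcases hmem with hsmall | hbig
      · push_neg at hsmall
        have h1 : cs/(ld*b) ≤ V b := hVlbS b hb
        have h2 : cs/(ld*δ) ≤ cs/(ld*b) := by
          apply div_le_div_of_nonneg_left hcs.le (by positivity)
          exact mul_le_mul_of_nonneg_left hsmall.le hld.le
        have h3 : |C| + 1 ≤ cs/(ld*δ) := by
          rw [le_div_iff₀ (by positivity)]
          have hδle : δ ≤ cs/(ld*(|C|+1)) := min_le_right _ _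
          have habs : (0:ℝ) < |C| + 1 := by positivity
          rw [le_div_iff₀ (by positivity)] at hδle
          nlinarith
        have : C < V b := by
          have := le_abs_self C
          linarith
        linarith
      · push_neg at hbig
        have h1 : b - 1/(lc+ld) ≤ V b := hVlbB b hb
        have h2 : C + 1/(lc+ld) + 1 ≤ M := le_max_right _ _
        linarith
  · -- critical point equation
    intro b hb hderiv
    have hx := hx0 b
    have hx' := hx1 b hb
    have hdne : den b ≠ 0 := ne_of_gt (hden_pos b hb)
    have he : HasDerivAt (fun b : ℝ => Real.exp (-(lc+ld)*b))
        (Real.exp (-(lc+ld)*b) * (-(lc+ld))) b := by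
      simpa using ((hasDerivAt_id b).const_mul (-(lc+ld))).exp
    have hdnum : HasDerivAt num (den b) b := by
      have h1 : HasDerivAt (fun b : ℝ => b - (1 - Real.exp (-(lc+ld)*b))/(lc+ld))
          (1 - (0 - Real.exp (-(lc+ld)*b) * (-(lc+ld)))/(lc+ld)) b :=
        (hasDerivAt_id b).sub (((hasDerivAt_const b 1).sub he).div_const _)
      have h2 := (h1.const_mul (ld/(lc+ld))).const_add cs
      rw [hnumdef, hdendef]
      refine h2.congr_deriv ?_
      beta_reduce
      field_simp
      ring
    have hdden : HasDerivAt den (ld * Real.exp (-(lc+ld)*b)) b := by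
      have h2 := ((hasDerivAt_const b 1).sub he).const_mul (ld/(lc+ld))
      rw [hdendef]
      refine h2.congr_deriv ?_
      beta_reduce
      field_simp
      ring
    have hdV : HasDerivAt V
        ((den b * den b - num b * (ld * Real.exp (-(lc+ld)*b))) / (den b)^2) b := by
      rw [hVeq]
      exact hdnum.div hdden hdne
    have hz : (den b * den b - num b * (ld * Real.exp (-(lc+ld)*b))) / (den b)^2 = 0 := by
      rw [← hdV.deriv]; exact hderiv
    have hkey : den b * den b = num b * (ld * Real.exp (-(lc+ld)*b)) := by
      have := (div_eq_zero_iff.mp hz).resolve_right (pow_ne_zero 2 hdne)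
      linarith
    simp only [hnumdef, hdendef] at hkey
    field_simp at hkey ⊢
    nlinarith [hkey]
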